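/- Let f be the map on formal power series in z given by f(a) = a + z(1−a)^2/(1−za). Suppose a = 1 + a_N z^N + (higher order terms) with N ≥ 1 and a_N ≠ 0, over a field of characteristic zero. Then f(a) − a = a_N^2 z^{2N+1} + O(z^{2N+2}), and for each k ≥ 0 the coefficient of z^{2N+1} in f^k(a) equals a_{2N+1} + k·a_N^2, where a_{2N+1} is the corresponding coefficient of a. Hence the iterates f^k(a) are pairwise distinct. -/

import Mathlib

open PowerSeries Finset

private lemma aux_coeff_mul_lt {K : Type*} [CommRing K] {φ ψ : PowerSeries K} {M : ℕ}
    (h : ∀ i < M, PowerSeries.coeff i φ = 0) :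
    (∀ j < M, PowerSeries.coeff j (φ * ψ) = 0) ∧
    PowerSeries.coeff M (φ * ψ)
      = PowerSeries.coeff M φ * PowerSeries.constantCoeff ψ := by
  constructor
  · intro j hj
    rw [PowerSeries.coeff_mul]
    refine Finset.sum_eq_zero fun p hp => ?_
    rw [Finset.HasAntidiagonal.mem_antidiagonal] at hp
    rw [h p.1 (by omega), zero_mul]
  · rw [PowerSeries.coeff_mul, Finset.sum_eq_single (M, 0)]
    · simp [PowerSeries.coeff_zero_eq_constantCoeff]
    · intro p hp hne
      rw [Finset.HasAntidiagonal.mem_antidiagonal] at hp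
      by_cases hM : p.1 = M
      · exact absurd (Prod.ext hM (by omega)) hne
      · rw [h p.1 (by omega), zero_mul]
    · intro hmem
      exact absurd (Finset.HasAntidiagonal.mem_antidiagonal.mpr (add_zero M)) hmem

private lemma key_step {K : Type*} [Field K]
    (f : PowerSeries K → PowerSeries K)
    (hf : ∀ x, f x = x + PowerSeries.X * (1 - x) ^ 2 * Ring.inverse (1 - PowerSeries.X * x))
    (N : ℕ) (hN1 : 1 ≤ N) (x : PowerSeries K)
    (h0 : PowerSeries.constantCoeff x = 1)
    (hlow : ∀ i, 0 < i → i < N → PowerSeries.coeff i x = 0) :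
    (∀ j < 2 * N + 1, PowerSeries.coeff j (f x - x) = 0) ∧
    PowerSeries.coeff (2 * N + 1) (f x - x) = (PowerSeries.coeff N x) ^ 2 := by
  set u := 1 - PowerSeries.X * x with hu
  have hcu : PowerSeries.constantCoeff u = 1 := by simp [hu]
  have hunit : IsUnit u := by
    apply IsUnit.of_mul_eq_one (a := u) u⁻¹
    exact PowerSeries.mul_inv_cancel _ (by rw [hcu]; exact one_ne_zero)
  have hinv1 : PowerSeries.constantCoeff (Ring.inverse u) = 1 := by
    have h1 := Ring.mul_inverse_cancel u hunit
    have h2 := congrArg (PowerSeries.constantCoeff) h1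
    simp only [map_mul, map_one, hcu, one_mul] at h2
    exact h2
  set b := (1 : PowerSeries K) - x with hb
  have hNne : N ≠ 0 := by omega
  have hblow : ∀ i < N, PowerSeries.coeff i b = 0 := by
    intro i hi
    rcases Nat.eq_zero_or_pos i with h | h
    · subst h
      simp [hb, PowerSeries.coeff_zero_eq_constantCoeff, h0]
    · have : i ≠ 0 := by omega
      simp [hb, map_sub, PowerSeries.coeff_one, this, hlow i h hi]
  have hbN : PowerSeries.coeff N b = -(PowerSeries.coeff N x) := by
    simp [hb, map_sub, PowerSeries.coeff_one, hNne]
  have hbb_lt : ∀ j < 2 * N, PowerSeries.coeff j (b * b) = 0 := by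
    intro j hj
    rw [PowerSeries.coeff_mul]
    refine Finset.sum_eq_zero fun p hp => ?_
    rw [Finset.HasAntidiagonal.mem_antidiagonal] at hp
    rcases lt_or_ge p.1 N with h | h
    · rw [hblow p.1 h, zero_mul]
    · rw [hblow p.2 (by omega), mul_zero]
  have hbb : PowerSeries.coeff (2 * N) (b * b) = (PowerSeries.coeff N x) ^ 2 := by
    rw [PowerSeries.coeff_mul, Finset.sum_eq_single (N, N)]
    · rw [hbN]; ring
    · intro p hp hne
      rw [Finset.HasAntidiagonal.mem_antidiagonal] at hp
      rcases lt_or_ge p.1 N with h | h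
      · rw [hblow p.1 h, zero_mul]
      · by_cases h' : p.1 = N
        · exact absurd (Prod.ext h' (by omega)) hne
        · rw [hblow p.2 (by omega), mul_zero]
    · intro hmem
      exact absurd (Finset.HasAntidiagonal.mem_antidiagonal.mpr (by omega)) hmem
  set c := b * b with hc
  obtain ⟨hci_lt, hci⟩ := aux_coeff_mul_lt (ψ := Ring.inverse u) hbb_lt
  have hfx : f x - x = PowerSeries.X * (c * Ring.inverse u) := by
    rw [hf x, hc, hb, hu]; ring
  constructor
  · intro j hj
    rw [hfx]
    rcases Nat.eq_zero_or_pos j with h | h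
    · subst h
      simp [PowerSeries.coeff_zero_eq_constantCoeff]
    · obtain ⟨j', rfl⟩ := Nat.exists_eq_succ_of_ne_zero (by omega : j ≠ 0)
      rw [PowerSeries.coeff_succ_X_mul]
      exact hci_lt j' (by omega)
  · rw [hfx]
    have : 2 * N + 1 = (2 * N) + 1 := rfl
    rw [this, PowerSeries.coeff_succ_X_mul, hci, hbb, hinv1, mul_one]

theorem stmt14 {K : Type*} [Field K] [CharZero K]
    (f : PowerSeries K → PowerSeries K)
    (hf : ∀ x, f x = x + PowerSeries.X * (1 - x) ^ 2 * Ring.inverse (1 - PowerSeries.X * x))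
    (a : PowerSeries K) (N : ℕ) (hN1 : 1 ≤ N)
    (h0 : PowerSeries.constantCoeff a = 1)
    (hN : PowerSeries.coeff N a ≠ 0)
    (hlow : ∀ i, 0 < i → i < N → PowerSeries.coeff i a = 0) :
    (∀ j < 2 * N + 1, PowerSeries.coeff j (f a - a) = 0) ∧
    PowerSeries.coeff (2 * N + 1) (f a - a) = (PowerSeries.coeff N a) ^ 2 ∧
    (∀ m : ℕ, PowerSeries.coeff (2 * N + 1) (f^[m] a)
      = PowerSeries.coeff (2 * N + 1) a + (m : K) * (PowerSeries.coeff N a) ^ 2) ∧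
    (∀ m l : ℕ, f^[m] a = f^[l] a → m = l) := by
  obtain ⟨ha_lt, ha⟩ := key_step f hf N hN1 a h0 hlow
  have main : ∀ m : ℕ,
      PowerSeries.constantCoeff (f^[m] a) = 1 ∧
      (∀ i, 0 < i → i < N → PowerSeries.coeff i (f^[m] a) = 0) ∧
      PowerSeries.coeff N (f^[m] a) = PowerSeries.coeff N a ∧
      PowerSeries.coeff (2 * N + 1) (f^[m] a)
        = PowerSeries.coeff (2 * N + 1) a + (m : K) * (PowerSeries.coeff N a) ^ 2 := by
    intro m
    induction m with
    | zero =>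
      exact ⟨by simp [h0], by simpa using hlow, by simp, by simp⟩
    | succ m ih =>
      obtain ⟨H0, Hlow, HN, H2⟩ := ih
      obtain ⟨K1, K2⟩ := key_step f hf N hN1 (f^[m] a) H0 Hlow
      have hiter : f^[m + 1] a = f (f^[m] a) := Function.iterate_succ_apply' f m a
      have hsame : ∀ j < 2 * N + 1,
          PowerSeries.coeff j (f (f^[m] a)) = PowerSeries.coeff j (f^[m] a) := by
        intro j hj
        have := K1 j hj
        rw [map_sub, sub_eq_zero] at this
        exact this
      refine ⟨?_, ?_, ?_, ?_⟩
      · rw [hiter, ← PowerSeries.coeff_zero_eq_constantCoeff, hsame 0 (by omega),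
          PowerSeries.coeff_zero_eq_constantCoeff]
        exact H0
      · intro i hi1 hi2
        rw [hiter, hsame i (by omega)]
        exact Hlow i hi1 hi2
      · rw [hiter, hsame N (by omega)]
        exact HN
      · rw [map_sub] at K2
        rw [hiter]
        have : PowerSeries.coeff (2 * N + 1) (f (f^[m] a))
            = PowerSeries.coeff (2 * N + 1) (f^[m] a)
              + (PowerSeries.coeff N (f^[m] a)) ^ 2 := by linear_combination K2
        rw [this, HN, H2]
        push_cast
        ring
  refine ⟨ha_lt, ha, fun m => (main m).2.2.2, ?_⟩
  intro m l h
  have hm := (main m).2.2.2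
  have hl := (main l).2.2.2
  rw [h, hl] at hm
  have : (m : K) * (PowerSeries.coeff N a) ^ 2
      = (l : K) * (PowerSeries.coeff N a) ^ 2 := by linear_combination hm.symm
  have hsq : (PowerSeries.coeff N a) ^ 2 ≠ 0 := pow_ne_zero _ hN
  have : (m : K) = (l : K) := mul_right_cancel₀ hsq this
  exact_mod_cast this
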